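/- arXiv:2202.08376 — 2 statements merged into one kernel-verified Lean document; each statement's English description precedes it below -/
import Mathlib

section
/- (Optimality of the scaled repulsion update for the variance objective) Let y₁,…,y_m be vectors with mean ȳ, not all equal, S = ∑ᵢ‖yᵢ - ȳ‖² > 0, ε > 0, and α* = ε/√S. Then x*ᵢ = yᵢ + α*(yᵢ - ȳ) satisfies ∑ᵢ‖x*ᵢ - yᵢ‖² ≤ ε², and for every family x'₁,…,x'_m with ∑ᵢ‖x'ᵢ - yᵢ‖² ≤ ε², one has ∑_{i,j}‖x'ᵢ - x'ⱼ‖² ≤ ∑_{i,j}‖x*ᵢ - x*ⱼ‖². -/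
open Finset
open scoped RealInnerProductSpace

variable {E : Type*} [NormedAddCommGroup E] [InnerProductSpace ℝ E]

lemma aux_mean_zero {m : ℕ} (hm : (m : ℝ) ≠ 0) (x : Fin m → E) :
    ∑ i, (x i - (m : ℝ)⁻¹ • ∑ j, x j) = 0 := by
  rw [Finset.sum_sub_distrib, Finset.sum_const, Finset.card_fin]
  rw [← Nat.cast_smul_eq_nsmul ℝ, smul_smul, mul_inv_cancel₀ hm, one_smul, sub_self]

lemma aux_double_sum {m : ℕ} (x : Fin m → E) (c : E)
    (hc : ∑ i, (x i - c) = 0) :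
    ∑ i, ∑ j, ‖x i - x j‖ ^ 2 = 2 * m * ∑ i, ‖x i - c‖ ^ 2 := by
  have h : ∀ i j : Fin m, ‖x i - x j‖ ^ 2
      = ‖x i - c‖ ^ 2 + ‖x j - c‖ ^ 2 - 2 * (inner ℝ (x i - c) (x j - c) : ℝ) := by
    intro i j
    have e : x i - x j = (x i - c) - (x j - c) := by abel
    rw [e, @norm_sub_sq_real]; ring
  calc ∑ i, ∑ j, ‖x i - x j‖ ^ 2
      = ∑ i : Fin m, ((m : ℝ) * ‖x i - c‖ ^ 2 + (∑ j, ‖x j - c‖ ^ 2)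
          - 2 * (inner ℝ (x i - c) (∑ j, (x j - c)) : ℝ)) := by
        refine Finset.sum_congr rfl fun i _ => ?_
        rw [inner_sum]
        simp_rw [h]
        rw [Finset.sum_sub_distrib, Finset.sum_add_distrib, Finset.sum_const,
          Finset.card_fin, nsmul_eq_mul, ← Finset.mul_sum]
    _ = 2 * m * ∑ i, ‖x i - c‖ ^ 2 := by
        rw [hc]
        simp only [inner_zero_right, mul_zero, sub_zero]
        rw [Finset.sum_add_distrib, ← Finset.mul_sum, Finset.sum_const,
          Finset.card_fin, nsmul_eq_mul]
        ring

lemma aux_var_min {m : ℕ} (x : Fin m → E) (c d : E) (hc : ∑ i, (x i - c) = 0) :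
    ∑ i, ‖x i - c‖ ^ 2 ≤ ∑ i, ‖x i - d‖ ^ 2 := by
  have h : ∀ i, ‖x i - d‖ ^ 2
      = ‖x i - c‖ ^ 2 + 2 * (inner ℝ (x i - c) (c - d) : ℝ) + ‖c - d‖ ^ 2 := by
    intro i
    have e : x i - d = (x i - c) + (c - d) := by abel
    rw [e, @norm_add_sq_real]
  simp_rw [h]
  rw [Finset.sum_add_distrib, Finset.sum_add_distrib, ← Finset.mul_sum,
    ← sum_inner, hc, inner_zero_left]
  have h0 : (0:ℝ) ≤ ∑ _i : Fin m, ‖c - d‖ ^ 2 :=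
    Finset.sum_nonneg fun i _ => sq_nonneg _
  linarith

lemma aux_minkowski {m : ℕ} (a b : Fin m → E) :
    ∑ i, ‖a i + b i‖ ^ 2
      ≤ (Real.sqrt (∑ i, ‖a i‖ ^ 2) + Real.sqrt (∑ i, ‖b i‖ ^ 2)) ^ 2 := by
  set A := ∑ i, ‖a i‖ ^ 2 with hA'
  set B := ∑ i, ‖b i‖ ^ 2 with hB'
  have hA : 0 ≤ A := Finset.sum_nonneg fun _ _ => sq_nonneg _
  have hB : 0 ≤ B := Finset.sum_nonneg fun _ _ => sq_nonneg _
  have h1 : ∑ i, ‖a i + b i‖ ^ 2 ≤ A + 2 * ∑ i, ‖a i‖ * ‖b i‖ + B := by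
    have key : ∀ i, ‖a i + b i‖ ^ 2 ≤ ‖a i‖ ^ 2 + 2 * (‖a i‖ * ‖b i‖) + ‖b i‖ ^ 2 := by
      intro i
      have h := norm_add_le (a i) (b i)
      nlinarith [norm_nonneg (a i + b i)]
    calc ∑ i, ‖a i + b i‖ ^ 2
        ≤ ∑ i, (‖a i‖ ^ 2 + 2 * (‖a i‖ * ‖b i‖) + ‖b i‖ ^ 2) :=
          Finset.sum_le_sum fun i _ => key i
      _ = A + 2 * ∑ i, ‖a i‖ * ‖b i‖ + B := by
          rw [Finset.sum_add_distrib, Finset.sum_add_distrib, ← Finset.mul_sum]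
  have h2 : ∑ i, ‖a i‖ * ‖b i‖ ≤ Real.sqrt A * Real.sqrt B :=
    Real.sum_mul_le_sqrt_mul_sqrt _ _ _
  have hsq : (Real.sqrt A + Real.sqrt B) ^ 2
      = A + 2 * (Real.sqrt A * Real.sqrt B) + B := by
    rw [add_sq, Real.sq_sqrt hA, Real.sq_sqrt hB]; ring
  rw [hsq]; linarith

theorem scaled_repulsion_optimal
    (n m : ℕ) (hm : 2 ≤ m) (y : Fin m → EuclideanSpace ℝ (Fin n))
    (ybar : EuclideanSpace ℝ (Fin n)) (hybar : ybar = (m : ℝ)⁻¹ • ∑ i, y i)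
    (S : ℝ) (hS : S = ∑ i, ‖y i - ybar‖ ^ 2) (hSpos : 0 < S)
    (ε : ℝ) (hε : 0 < ε)
    (xstar : Fin m → EuclideanSpace ℝ (Fin n))
    (hxstar : ∀ i, xstar i = y i + (ε / Real.sqrt S) • (y i - ybar)) :
    (∑ i, ‖xstar i - y i‖ ^ 2 ≤ ε ^ 2) ∧
    ∀ x' : Fin m → EuclideanSpace ℝ (Fin n),
      ∑ i, ‖x' i - y i‖ ^ 2 ≤ ε ^ 2 →
      ∑ i, ∑ j, ‖x' i - x' j‖ ^ 2 ≤ ∑ i, ∑ j, ‖xstar i - xstar j‖ ^ 2 := by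
  have hm0 : (m : ℝ) ≠ 0 := by
    have h2 : (0 : ℕ) < m := lt_of_lt_of_le (by norm_num) hm
    exact_mod_cast h2.ne'
  set α : ℝ := ε / Real.sqrt S with hα
  have hsqrtpos : 0 < Real.sqrt S := Real.sqrt_pos.2 hSpos
  have hsq : Real.sqrt S ^ 2 = S := Real.sq_sqrt hSpos.le
  have hαsqrt : α * Real.sqrt S = ε := div_mul_cancel₀ ε hsqrtpos.ne'
  have hmeany : ∑ i, (y i - ybar) = 0 := by
    rw [hybar]; exact aux_mean_zero hm0 y
  -- part 1
  have hdiff : ∀ i, xstar i - y i = α • (y i - ybar) := by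
    intro i; rw [hxstar i]; abel
  have part1 : ∑ i, ‖xstar i - y i‖ ^ 2 = ε ^ 2 := by
    have : ∀ i, ‖xstar i - y i‖ ^ 2 = α ^ 2 * ‖y i - ybar‖ ^ 2 := by
      intro i
      rw [hdiff i, norm_smul, Real.norm_eq_abs, mul_pow, sq_abs]
    simp_rw [this]
    rw [← Finset.mul_sum, ← hS, hα, div_pow, hsq,
      div_mul_cancel₀ _ hSpos.ne']
  refine ⟨part1.le, ?_⟩
  intro x' hx'
  -- value for xstar
  have hstar_sub : ∀ i, xstar i - ybar = (1 + α) • (y i - ybar) := by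
    intro i
    rw [hxstar i, add_smul, one_smul]
    abel
  have hmeanstar : ∑ i, (xstar i - ybar) = 0 := by
    simp_rw [hstar_sub, ← Finset.smul_sum, hmeany, smul_zero]
  have hRHS : ∑ i, ∑ j, ‖xstar i - xstar j‖ ^ 2
      = 2 * m * ((Real.sqrt S + ε) ^ 2) := by
    rw [aux_double_sum xstar ybar hmeanstar]
    have h1 : ∀ i, ‖xstar i - ybar‖ ^ 2 = (1 + α) ^ 2 * ‖y i - ybar‖ ^ 2 := by
      intro i
      rw [hstar_sub i, norm_smul, Real.norm_eq_abs, mul_pow, sq_abs]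
    simp_rw [h1]
    rw [← Finset.mul_sum, ← hS]
    have : (1 + α) ^ 2 * S = (Real.sqrt S + ε) ^ 2 := by
      linear_combination (-(1 + α) ^ 2) * hsq
        + (2 * Real.sqrt S + α * Real.sqrt S + ε) * hαsqrt
    rw [this]
  -- bound for x'
  set c : EuclideanSpace ℝ (Fin n) := (m : ℝ)⁻¹ • ∑ i, x' i with hc
  have hmean' : ∑ i, (x' i - c) = 0 := aux_mean_zero hm0 x'
  have hLHS : ∑ i, ∑ j, ‖x' i - x' j‖ ^ 2 = 2 * m * ∑ i, ‖x' i - c‖ ^ 2 :=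
    aux_double_sum x' c hmean'
  have hvar : ∑ i, ‖x' i - c‖ ^ 2 ≤ ∑ i, ‖x' i - ybar‖ ^ 2 :=
    aux_var_min x' c ybar hmean'
  have hmink : ∑ i, ‖x' i - ybar‖ ^ 2
      ≤ (Real.sqrt (∑ i, ‖x' i - y i‖ ^ 2) + Real.sqrt S) ^ 2 := by
    have h := aux_minkowski (fun i => x' i - y i) (fun i => y i - ybar)
    simp_rw [show ∀ i, (x' i - y i) + (y i - ybar) = x' i - ybar from fun i => by abel]
      at h
    rwa [← hS] at h
  have hsqrtle : Real.sqrt (∑ i, ‖x' i - y i‖ ^ 2) ≤ ε := by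
    calc Real.sqrt (∑ i, ‖x' i - y i‖ ^ 2) ≤ Real.sqrt (ε ^ 2) :=
          Real.sqrt_le_sqrt hx'
      _ = ε := Real.sqrt_sq hε.le
  have hfinal : ∑ i, ‖x' i - c‖ ^ 2 ≤ (Real.sqrt S + ε) ^ 2 := by
    have h3 : (Real.sqrt (∑ i, ‖x' i - y i‖ ^ 2) + Real.sqrt S) ^ 2
        ≤ (ε + Real.sqrt S) ^ 2 := by
      have hnn : 0 ≤ Real.sqrt (∑ i, ‖x' i - y i‖ ^ 2) + Real.sqrt S := by positivity
      have := add_le_add_right hsqrtle (Real.sqrt S)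
      nlinarith
    have : (ε + Real.sqrt S) ^ 2 = (Real.sqrt S + ε) ^ 2 := by ring
    linarith
  rw [hLHS, hRHS]
  have hmnn : (0:ℝ) ≤ 2 * m := by positivity
  exact mul_le_mul_of_nonneg_left hfinal hmnn
end

section
/- Let f be (1/μ)-smooth with global minimum value f* = min f, y_i = x_i - μ∇f(x_i), η ∈ (0,1), α* = η√(∑ᵢ‖yᵢ-xᵢ‖²)/√(∑ᵢ‖yᵢ-ȳ‖²) (assuming the denominator is positive), and x'ᵢ = yᵢ + α*(yᵢ - ȳ). Then ∑ᵢ f(x'ᵢ) ≤ ∑ᵢ f(xᵢ) - (1-η²)(μ/2)∑ᵢ‖∇f(xᵢ)‖². (Descent guarantee of the diversified gradient update.) -/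
open scoped RealInnerProductSpace

theorem descent_lemma_aux {E : Type*} [NormedAddCommGroup E] [InnerProductSpace ℝ E] [CompleteSpace E]
    (f : E → ℝ) (μ : ℝ) (hμ : 0 < μ) (hf : ContDiff ℝ 2 f)
    (hH : ∀ x, ‖fderiv ℝ (fderiv ℝ f) x‖ ≤ 1 / μ) (a b : E) :
    f b ≤ f a + ⟪gradient f a, b - a⟫ + 1/(2*μ) * ‖b - a‖^2 := by
  set v := b - a with hv
  have hdf : Differentiable ℝ f := hf.differentiable two_ne_zero
  have hdf' : Differentiable ℝ (fderiv ℝ f) :=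
    (hf.fderiv_right (m := 1) (by norm_num)).differentiable one_ne_zero
  -- Lipschitz bound on fderiv
  have hlip : ∀ p q : E, ‖fderiv ℝ f p - fderiv ℝ f q‖ ≤ (1/μ) * ‖p - q‖ := by
    intro p q
    exact Convex.norm_image_sub_le_of_norm_fderiv_le
      (fun z _ => hdf' z) (fun z _ => hH z) convex_univ trivial trivial
  -- curve
  have hcurve : ∀ t : ℝ, HasDerivAt (fun t : ℝ => a + t • v) v t := by
    intro t
    have h1 : HasDerivAt (fun t : ℝ => t • v) ((1:ℝ) • v) t := (hasDerivAt_id t).smul_const v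
    simpa using h1.const_add a
  have hg : ∀ t : ℝ, HasDerivAt (fun t : ℝ => f (a + t • v))
      (fderiv ℝ f (a + t • v) v) t := by
    intro t
    exact (hdf (a + t • v)).hasFDerivAt.comp_hasDerivAt t (hcurve t)
  set ψ : ℝ → ℝ := fun t => f (a + t • v) - t * (fderiv ℝ f a v) - t^2 * (‖v‖^2 / (2*μ)) with hψ
  have hψd : ∀ t : ℝ, HasDerivAt ψ
      (fderiv ℝ f (a + t • v) v - fderiv ℝ f a v - 2 * t * (‖v‖^2 / (2*μ))) t := by
    intro t
    have h2 : HasDerivAt (fun t : ℝ => t * (fderiv ℝ f a v)) (fderiv ℝ f a v) t := by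
      simpa using (hasDerivAt_id t).mul_const (fderiv ℝ f a v)
    have h3 : HasDerivAt (fun t : ℝ => t^2 * (‖v‖^2 / (2*μ))) (2 * t * (‖v‖^2 / (2*μ))) t := by
      simpa using (hasDerivAt_pow 2 t).mul_const (‖v‖^2 / (2*μ))
    exact ((hg t).sub h2).sub h3
  have hanti : AntitoneOn ψ (Set.Ici (0:ℝ)) := by
    apply antitoneOn_of_deriv_nonpos (convex_Ici 0)
      (fun t _ => (hψd t).continuousAt.continuousWithinAt)
      (fun t _ => ((hψd t).differentiableAt).differentiableWithinAt)
    intro t ht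
    rw [interior_Ici] at ht
    rw [(hψd t).deriv]
    have ht0 : 0 ≤ t := le_of_lt ht
    have h4 : fderiv ℝ f (a + t • v) v - fderiv ℝ f a v ≤ (1/μ) * (t * ‖v‖) * ‖v‖ := by
      have := (fderiv ℝ f (a + t • v) - fderiv ℝ f a).le_opNorm v
      have h5 : ‖fderiv ℝ f (a + t • v) - fderiv ℝ f a‖ ≤ (1/μ) * (t * ‖v‖) := by
        have := hlip (a + t • v) a
        simpa [norm_smul, abs_of_nonneg ht0] using this
      calc fderiv ℝ f (a + t • v) v - fderiv ℝ f a v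
          = (fderiv ℝ f (a + t • v) - fderiv ℝ f a) v := by simp
        _ ≤ ‖(fderiv ℝ f (a + t • v) - fderiv ℝ f a) v‖ := le_abs_self _
        _ ≤ ‖fderiv ℝ f (a + t • v) - fderiv ℝ f a‖ * ‖v‖ :=
            (fderiv ℝ f (a + t • v) - fderiv ℝ f a).le_opNorm v
        _ ≤ (1/μ) * (t * ‖v‖) * ‖v‖ := by
            apply mul_le_mul_of_nonneg_right h5 (norm_nonneg v)
    have : 2 * t * (‖v‖^2 / (2*μ)) = (1/μ) * (t * ‖v‖) * ‖v‖ := by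
      field_simp
    linarith [h4]
  have hkey : ψ 1 ≤ ψ 0 := hanti Set.self_mem_Ici (by norm_num) zero_le_one
  have hgrad : ⟪gradient f a, v⟫ = fderiv ℝ f a v := by
    simp [gradient, InnerProductSpace.toDual_symm_apply]
  simp only [hψ, one_smul, zero_smul, add_zero, one_pow, one_mul, zero_pow, zero_mul,
    sub_zero, mul_zero] at hkey
  have : a + v = b := by rw [hv]; abel
  rw [this] at hkey
  norm_num at hkey
  rw [hgrad]
  have heq : 1/(2*μ) * ‖v‖^2 = ‖v‖^2/(2*μ) := by ring
  linarith [hkey]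

theorem diversified_gradient_descent_guarantee
    (n m : ℕ) (f : EuclideanSpace ℝ (Fin n) → ℝ) (μ : ℝ) (hμ : 0 < μ)
    (hf : ContDiff ℝ 2 f)
    (hH : ∀ x, ‖fderiv ℝ (fderiv ℝ f) x‖ ≤ 1 / μ)
    (x : Fin m → EuclideanSpace ℝ (Fin n))
    (y : Fin m → EuclideanSpace ℝ (Fin n))
    (hy : ∀ i, y i = x i - μ • gradient f (x i))
    (ybar : EuclideanSpace ℝ (Fin n)) (hybar : ybar = (m : ℝ)⁻¹ • ∑ i, y i)
    (hSpos : 0 < ∑ i, ‖y i - ybar‖ ^ 2)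
    (η : ℝ) (hη : η ∈ Set.Ioo (0 : ℝ) 1)
    (αstar : ℝ)
    (hα : αstar = η * Real.sqrt (∑ i, ‖y i - x i‖ ^ 2) / Real.sqrt (∑ i, ‖y i - ybar‖ ^ 2))
    (x' : Fin m → EuclideanSpace ℝ (Fin n))
    (hx' : ∀ i, x' i = y i + αstar • (y i - ybar)) :
    ∑ i, f (x' i) ≤ ∑ i, f (x i)
      - (1 - η ^ 2) * (μ / 2) * ∑ i, ‖gradient f (x i)‖ ^ 2 := by
  have hμ' : μ ≠ 0 := hμ.ne'
  have hSx : ∑ i, ‖y i - x i‖^2 = μ^2 * ∑ i, ‖gradient f (x i)‖^2 := by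
    rw [Finset.mul_sum]
    refine Finset.sum_congr rfl fun i _ => ?_
    rw [hy i]
    have : x i - μ • gradient f (x i) - x i = -(μ • gradient f (x i)) := by abel
    rw [this, norm_neg, norm_smul, mul_pow, Real.norm_eq_abs, sq_abs]
  have hSxnn : (0:ℝ) ≤ ∑ i, ‖y i - x i‖^2 :=
    Finset.sum_nonneg fun i _ => sq_nonneg _
  have hα2 : αstar^2 * (∑ i, ‖y i - ybar‖^2) = η^2 * ∑ i, ‖y i - x i‖^2 := by
    rw [hα, div_pow, mul_pow, Real.sq_sqrt hSxnn, Real.sq_sqrt hSpos.le]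
    field_simp
  have hper : ∀ i, f (x' i) ≤ f (x i) - (μ/2) * ‖gradient f (x i)‖^2
      + αstar^2/(2*μ) * ‖y i - ybar‖^2 := by
    intro i
    have hb := descent_lemma_aux f μ hμ hf hH (x i) (x' i)
    have hdiff : x' i - x i = αstar • (y i - ybar) - μ • gradient f (x i) := by
      rw [hx' i, hy i]; abel
    rw [hdiff] at hb
    set g := gradient f (x i)
    set d := y i - ybar
    have h1 : ⟪g, αstar • d - μ • g⟫ = αstar * ⟪g, d⟫ - μ * ‖g‖^2 := by
      rw [inner_sub_right, real_inner_smul_right, real_inner_smul_right,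
        real_inner_self_eq_norm_sq]
    have h2 : ‖αstar • d - μ • g‖^2
        = αstar^2*‖d‖^2 - 2*(αstar*μ)*⟪g,d⟫ + μ^2*‖g‖^2 := by
      rw [norm_sub_sq_real, norm_smul, norm_smul, real_inner_smul_left,
        real_inner_smul_right, mul_pow, mul_pow, Real.norm_eq_abs, Real.norm_eq_abs,
        sq_abs, sq_abs, real_inner_comm]
      ring
    rw [h1, h2] at hb
    calc f (x' i) ≤ _ := hb
      _ = f (x i) - (μ/2) * ‖g‖^2 + αstar^2/(2*μ) * ‖d‖^2 := by field_simp; ring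
  have hsum := Finset.sum_le_sum (fun i (_ : i ∈ Finset.univ) => hper i)
  rw [Finset.sum_add_distrib, Finset.sum_sub_distrib, ← Finset.mul_sum, ← Finset.mul_sum]
    at hsum
  have hfin : αstar^2/(2*μ) * (∑ i, ‖y i - ybar‖^2)
      = η^2 * (μ/2) * ∑ i, ‖gradient f (x i)‖^2 := by
    have : αstar^2 * (∑ i, ‖y i - ybar‖^2) = η^2 * (μ^2 * ∑ i, ‖gradient f (x i)‖^2) := by
      rw [hα2, hSx]
    field_simp
    nlinarith [this]
  nlinarith [hsum, hfin]
end
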